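/- arXiv:1007.5246 — 3 statements merged into one kernel-verified Lean document; each statement's English description precedes it below -/
import Mathlib

section
/- (Rado's theorem) Let a ∈ ℝⁿ and let V_a denote the convex hull of the set {(a_{π(1)}, …, a_{π(n)}) : π ∈ S_n} of all coordinate permutations of a. Then a point x ∈ ℝⁿ belongs to V_a if and only if x is majorized by a, i.e. for every l ∈ {1, …, n} the sum of the l largest components of x is at most the sum of the l largest components of a, with equality when l = n. -/
open Finset

/-- The sum of the `l` largest components of `x : Fin n → ℝ`, defined as the
supremum of sums over index sets of cardinality `l`. -/
noncomputable def sumLargest {n : ℕ} (x : Fin n → ℝ) (l : ℕ) : ℝ :=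
  sSup ((fun A : Finset (Fin n) => ∑ i ∈ A, x i) '' {A | A.card = l})

/-- `x` is majorized by `a`: for every `1 ≤ l ≤ n` the sum of the `l` largest
components of `x` is at most that of `a`, with equality for `l = n`. -/
def Majorizes {n : ℕ} (x a : Fin n → ℝ) : Prop :=
  (∀ l, 1 ≤ l → l ≤ n → sumLargest x l ≤ sumLargest a l) ∧
    sumLargest x n = sumLargest a n

namespace RadoAux

variable {n : ℕ}

lemma img_finite (x : Fin n → ℝ) (l : ℕ) :
    ((fun A : Finset (Fin n) => ∑ i ∈ A, x i) '' {A | A.card = l}).Finite :=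
  (Set.toFinite _).image _

lemma img_nonempty (x : Fin n → ℝ) {l : ℕ} (hl : l ≤ n) :
    ((fun A : Finset (Fin n) => ∑ i ∈ A, x i) '' {A | A.card = l}).Nonempty := by
  obtain ⟨A, -, hA⟩ := Finset.exists_subset_card_eq
    (show l ≤ (Finset.univ : Finset (Fin n)).card by simpa using hl)
  exact ⟨_, ⟨A, hA, rfl⟩⟩

lemma sum_le_sumLargest (x : Fin n → ℝ) {A : Finset (Fin n)} {l : ℕ} (hA : A.card = l) :
    ∑ i ∈ A, x i ≤ sumLargest x l :=
  le_csSup (img_finite x l).bddAbove ⟨A, hA, rfl⟩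

lemma sumLargest_le (x : Fin n → ℝ) {l : ℕ} (hl : l ≤ n) {r : ℝ}
    (h : ∀ A : Finset (Fin n), A.card = l → ∑ i ∈ A, x i ≤ r) : sumLargest x l ≤ r := by
  refine csSup_le (img_nonempty x hl) ?_
  rintro _ ⟨A, hA, rfl⟩
  exact h A hA

lemma sumLargest_univ (x : Fin n → ℝ) : sumLargest x n = ∑ i, x i := by
  have h1 : {A : Finset (Fin n) | A.card = n} = {Finset.univ} := by
    ext A
    simp [Set.mem_singleton_iff, ← Finset.card_eq_iff_eq_univ, Fintype.card_fin]
  rw [sumLargest, h1]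
  simp

lemma sumLargest_perm (a : Fin n → ℝ) (π : Equiv.Perm (Fin n)) (l : ℕ) :
    sumLargest (fun i => a (π i)) l = sumLargest a l := by
  unfold sumLargest
  congr 1
  ext r
  constructor
  · rintro ⟨A, hA, rfl⟩
    simp only [Set.mem_setOf_eq] at hA
    refine ⟨A.image π, by simp [Finset.card_image_of_injective _ π.injective, hA], ?_⟩
    simp [Finset.sum_image (fun i _ j _ h => π.injective h)]
  · rintro ⟨A, hA, rfl⟩
    simp only [Set.mem_setOf_eq] at hA
    refine ⟨A.image π.symm, by simp [Finset.card_image_of_injective _ π.symm.injective, hA], ?_⟩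
    simp [Finset.sum_image (fun i _ j _ h => π.symm.injective h)]

/-- Cardinality of the set of `k : Fin n` with `↑k < l`. -/
lemma card_filter_lt {l : ℕ} (hl : l ≤ n) :
    (Finset.univ.filter (fun k : Fin n => (k : ℕ) < l)).card = l := by
  have : Finset.univ.filter (fun k : Fin n => (k : ℕ) < l) =
      (Finset.univ : Finset (Fin l)).map ⟨Fin.castLE hl, Fin.castLE_injective hl⟩ := by
    ext k
    simp only [Finset.mem_filter, Finset.mem_univ, true_and, Finset.mem_map,
      Function.Embedding.coeFn_mk]
    constructor
    · intro hk
      exact ⟨⟨(k : ℕ), hk⟩, by ext; simp⟩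
    · rintro ⟨j, -, rfl⟩
      exact j.isLt
  rw [this]
  simp

/-- Prefix sums of a decreasingly-sorted rearrangement achieve `sumLargest`. -/
lemma prefix_sum_eq_sumLargest (a : Fin n → ℝ) (τ : Equiv.Perm (Fin n))
    (hτ : Antitone (fun k => a (τ k))) {l : ℕ} (hl : l ≤ n) :
    ∑ k ∈ Finset.univ.filter (fun k : Fin n => (k : ℕ) < l), a (τ k) = sumLargest a l := by
  set B0 := Finset.univ.filter (fun k : Fin n => (k : ℕ) < l) with hB0
  set B := B0.image τ with hBdef
  have hBcard : B.card = l := by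
    rw [hBdef, Finset.card_image_of_injective _ τ.injective, card_filter_lt hl]
  have hBsum : ∑ i ∈ B, a i = ∑ k ∈ B0, a (τ k) := by
    rw [hBdef, Finset.sum_image (fun i _ j _ h => τ.injective h)]
  refine le_antisymm ?L ?R
  case R =>
    rcases Nat.eq_zero_or_pos l with rfl | hl1
    · have : B0 = ∅ := by simp [hB0]
      rw [this]
      refine sumLargest_le a (Nat.zero_le n) ?_
      intro A hA
      rw [Finset.card_eq_zero] at hA
      simp [hA]
    · refine sumLargest_le a hl ?_
      intro A hA
      set t := a (τ ⟨l - 1, by omega⟩) with ht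
      have hmemB : ∀ i : Fin n, i ∈ B ↔ ((τ.symm i : Fin n) : ℕ) < l := by
        intro i
        rw [hBdef]
        simp only [Finset.mem_image, hB0, Finset.mem_filter, Finset.mem_univ, true_and]
        constructor
        · rintro ⟨k, hk, rfl⟩; simpa using hk
        · intro hi; exact ⟨τ.symm i, hi, τ.apply_symm_apply i⟩
      have h1 : ∀ i ∈ A \ B, a i ≤ t := by
        intro i hi
        have hiB : i ∉ B := (Finset.mem_sdiff.1 hi).2
        rw [hmemB] at hiB
        push_neg at hiB
        have : (⟨l - 1, by omega⟩ : Fin n) ≤ τ.symm i := by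
          rw [Fin.le_def]; simp; omega
        have := hτ this
        simpa [τ.apply_symm_apply] using this
      have h2 : ∀ i ∈ B \ A, t ≤ a i := by
        intro i hi
        have hiB : i ∈ B := (Finset.mem_sdiff.1 hi).1
        rw [hmemB] at hiB
        have : τ.symm i ≤ (⟨l - 1, by omega⟩ : Fin n) := by
          rw [Fin.le_def]; simp; omega
        have := hτ this
        simpa [τ.apply_symm_apply] using this
      have hcard : (A \ B).card = (B \ A).card :=
        Finset.card_sdiff_comm (hA.trans hBcard.symm)
      have e1 : ∑ i ∈ A ∩ B, a i + ∑ i ∈ A \ B, a i = ∑ i ∈ A, a i :=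
        Finset.sum_inter_add_sum_sdiff A B a
      have e2 : ∑ i ∈ B ∩ A, a i + ∑ i ∈ B \ A, a i = ∑ i ∈ B, a i :=
        Finset.sum_inter_add_sum_sdiff B A a
      have i1 : ∑ i ∈ A \ B, a i ≤ ((A \ B).card : ℝ) * t := by
        simpa [nsmul_eq_mul] using Finset.sum_le_card_nsmul (A \ B) a t h1
      have i2 : ((B \ A).card : ℝ) * t ≤ ∑ i ∈ B \ A, a i := by
        simpa [nsmul_eq_mul] using Finset.card_nsmul_le_sum (B \ A) a t h2
      have e4 : ∑ i ∈ A ∩ B, a i = ∑ i ∈ B ∩ A, a i := by rw [Finset.inter_comm]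
      rw [← hBsum]
      rw [hcard] at i1
      linarith [e1, e2, i1, i2, e4]
  case L =>
    rw [← hBsum]
    exact sum_le_sumLargest a hBcard

/-- Sorting permutation making `a ∘ τ` antitone. -/
lemma exists_antitone_perm (a : Fin n → ℝ) :
    ∃ τ : Equiv.Perm (Fin n), Antitone (fun k => a (τ k)) := by
  refine ⟨Tuple.sort (fun i => -a i), ?_⟩
  intro j k hjk
  have := Tuple.monotone_sort (fun i => -a i) hjk
  simp only [Function.comp_apply] at this
  linarith

end RadoAux

namespace RadoAux

/-- Convert a permuted `Fin`-indexed prefix sum to a `range` sum. -/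
lemma range_sum_eq_filter_sum (x : Fin n → ℝ) (ρ : Equiv.Perm (Fin n)) {m : ℕ} (hm : m ≤ n) :
    ∑ j ∈ Finset.range m, (fun k : ℕ => if h : k < n then x (ρ ⟨k, h⟩) else 0) j =
      ∑ k ∈ Finset.univ.filter (fun k : Fin n => (k : ℕ) < m), x (ρ k) := by
  rw [Finset.sum_filter]
  have h1 : (∑ k : Fin n, if (k : ℕ) < m then x (ρ k) else 0) =
      ∑ j ∈ Finset.range n,
        (fun j : ℕ => if h : j < n then (if j < m then x (ρ ⟨j, h⟩) else 0) else 0) j := by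
    rw [← Fin.sum_univ_eq_sum_range]
    refine Finset.sum_congr rfl fun k _ => ?_
    simp [k.isLt]
  rw [h1]
  rw [← Finset.sum_subset (Finset.range_subset_range.2 hm)
    (fun j _ hj => by simp [Finset.mem_range] at hj; simp [hj])]
  refine (Finset.sum_congr rfl fun j hj => ?_).symm
  have hjm : j < m := Finset.mem_range.1 hj
  have hjn : j < n := lt_of_lt_of_le hjm hm
  simp [hjn, hjm]

/-- The key rearrangement/Abel-summation inequality. -/
lemma key_ineq {x a : Fin n → ℝ} (h : Majorizes x a) (c : Fin n → ℝ) :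
    ∃ π : Equiv.Perm (Fin n), ∑ i, c i * x i ≤ ∑ i, c i * a (π i) := by
  obtain ⟨σ, hσ⟩ := exists_antitone_perm c
  obtain ⟨τ, hτ⟩ := exists_antitone_perm a
  refine ⟨σ.symm.trans τ, ?_⟩
  -- reindex both sides through σ
  have hL : ∑ i, c i * x i = ∑ k, c (σ k) * x (σ k) :=
    (Equiv.sum_comp σ (fun i => c i * x i)).symm
  have hR : ∑ i, c i * a ((σ.symm.trans τ) i) = ∑ k, c (σ k) * a (τ k) := by
    rw [← Equiv.sum_comp σ (fun i => c i * a ((σ.symm.trans τ) i))]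
    refine Finset.sum_congr rfl fun k _ => ?_
    simp [Equiv.trans_apply]
  rw [hL, hR]
  -- pass to ℕ-indexed functions
  set F : ℕ → ℝ := fun k => if h : k < n then c (σ ⟨k, h⟩) else 0 with hF
  set Gx : ℕ → ℝ := fun k => if h : k < n then x (σ ⟨k, h⟩) else 0 with hGx
  set Ga : ℕ → ℝ := fun k => if h : k < n then a (τ ⟨k, h⟩) else 0 with hGa
  have hLn : ∑ k, c (σ k) * x (σ k) = ∑ j ∈ Finset.range n, F j * Gx j := by
    rw [← Fin.sum_univ_eq_sum_range (fun j => F j * Gx j) n]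
    refine Finset.sum_congr rfl fun k _ => ?_
    simp [hF, hGx, k.isLt]
  have hRn : ∑ k, c (σ k) * a (τ k) = ∑ j ∈ Finset.range n, F j * Ga j := by
    rw [← Fin.sum_univ_eq_sum_range (fun j => F j * Ga j) n]
    refine Finset.sum_congr rfl fun k _ => ?_
    simp [hF, hGa, k.isLt]
  rw [hLn, hRn]
  -- Abel summation on both sides
  have abelx := Finset.sum_range_by_parts F Gx n
  have abela := Finset.sum_range_by_parts F Ga n
  simp only [smul_eq_mul] at abelx abela
  rw [abelx, abela]
  -- prefix sums
  have hSx : ∀ m, m ≤ n → ∑ j ∈ Finset.range m, Gx j ≤ sumLargest x m := by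
    intro m hm
    rw [hGx, range_sum_eq_filter_sum x σ hm]
    have : ((Finset.univ.filter (fun k : Fin n => (k : ℕ) < m)).image σ).card = m := by
      rw [Finset.card_image_of_injective _ σ.injective, card_filter_lt hm]
    calc ∑ k ∈ Finset.univ.filter (fun k : Fin n => (k : ℕ) < m), x (σ k)
        = ∑ i ∈ (Finset.univ.filter (fun k : Fin n => (k : ℕ) < m)).image σ, x i := by
          rw [Finset.sum_image (fun i _ j _ hij => σ.injective hij)]
      _ ≤ sumLargest x m := sum_le_sumLargest x this
  have hSa : ∀ m, m ≤ n → ∑ j ∈ Finset.range m, Ga j = sumLargest a m := by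
    intro m hm
    rw [hGa, range_sum_eq_filter_sum a τ hm]
    exact prefix_sum_eq_sumLargest a τ hτ hm
  have htot : ∑ j ∈ Finset.range n, Gx j = ∑ j ∈ Finset.range n, Ga j := by
    rw [hSa n le_rfl]
    have hx : ∑ j ∈ Finset.range n, Gx j = sumLargest x n := by
      rw [hGx, range_sum_eq_filter_sum x σ le_rfl]
      have hfil : Finset.univ.filter (fun k : Fin n => (k : ℕ) < n) = Finset.univ := by
        ext k; simp [k.isLt]
      rw [hfil, sumLargest_univ, Equiv.sum_comp σ x]
    rw [hx, h.2]
  rw [htot]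
  -- compare term by term
  refine sub_le_sub_left (Finset.sum_le_sum fun i hi => ?_) _
  have hin : i < n - 1 := Finset.mem_range.1 hi
  have hi1n : i + 1 < n := by omega
  have hFle : F (i + 1) - F i ≤ 0 := by
    have hmono : c (σ ⟨i + 1, hi1n⟩) ≤ c (σ ⟨i, by omega⟩) := by
      refine hσ ?_
      rw [Fin.le_def]; simp
    simp only [hF]
    rw [dif_pos hi1n, dif_pos (show i < n by omega)]
    linarith
  have hxa : ∑ j ∈ Finset.range (i + 1), Gx j ≤ ∑ j ∈ Finset.range (i + 1), Ga j := by
    calc ∑ j ∈ Finset.range (i + 1), Gx j ≤ sumLargest x (i + 1) := hSx (i + 1) (by omega)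
      _ ≤ sumLargest a (i + 1) := h.1 (i + 1) (by omega) (by omega)
      _ = ∑ j ∈ Finset.range (i + 1), Ga j := (hSa (i + 1) (by omega)).symm
  exact mul_le_mul_of_nonpos_left hxa hFle

end RadoAux

/-- Rado's theorem: `x` lies in the convex hull of the coordinate permutations of `a`
if and only if `x` is majorized by `a`. -/
theorem rado_theorem (n : ℕ) (a x : Fin n → ℝ) :
    x ∈ convexHull ℝ {y : Fin n → ℝ | ∃ π : Equiv.Perm (Fin n), y = fun i => a (π i)} ↔
      Majorizes x a := by
  constructor
  · -- hull → majorization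
    intro hx
    have hgen : {y : Fin n → ℝ | ∃ π : Equiv.Perm (Fin n), y = fun i => a (π i)} ⊆
        {z : Fin n → ℝ | Majorizes z a} := by
      rintro y ⟨π, rfl⟩
      exact ⟨fun l _ _ => (RadoAux.sumLargest_perm a π l).le,
        by rw [RadoAux.sumLargest_perm a π n]⟩
    have hconv : Convex ℝ {z : Fin n → ℝ | Majorizes z a} := by
      rintro z hz w hw θ₁ θ₂ hθ₁ hθ₂ hsum
      constructor
      · intro l hl1 hln
        have step : sumLargest (θ₁ • z + θ₂ • w) l ≤
            θ₁ * sumLargest z l + θ₂ * sumLargest w l := by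
          refine RadoAux.sumLargest_le _ hln ?_
          intro A hA
          have e : ∑ i ∈ A, (θ₁ • z + θ₂ • w) i
              = θ₁ * ∑ i ∈ A, z i + θ₂ * ∑ i ∈ A, w i := by
            simp [Finset.sum_add_distrib, Finset.mul_sum, smul_eq_mul]
          rw [e]
          have h1 := RadoAux.sum_le_sumLargest z hA
          have h2 := RadoAux.sum_le_sumLargest w hA
          nlinarith
        have haz := hz.1 l hl1 hln
        have haw := hw.1 l hl1 hln
        have m1 := mul_le_mul_of_nonneg_left haz hθ₁
        have m2 := mul_le_mul_of_nonneg_left haw hθ₂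
        have e1 : θ₁ * sumLargest a l + θ₂ * sumLargest a l = sumLargest a l := by
          rw [← add_mul, hsum, one_mul]
        linarith
      · have ez : ∑ i, z i = ∑ i, a i := by
          have := hz.2
          rwa [RadoAux.sumLargest_univ, RadoAux.sumLargest_univ] at this
        have ew : ∑ i, w i = ∑ i, a i := by
          have := hw.2
          rwa [RadoAux.sumLargest_univ, RadoAux.sumLargest_univ] at this
        rw [RadoAux.sumLargest_univ, RadoAux.sumLargest_univ]
        have e : ∑ i, (θ₁ • z + θ₂ • w) i = θ₁ * ∑ i, z i + θ₂ * ∑ i, w i := by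
          simp [Finset.sum_add_distrib, Finset.mul_sum, smul_eq_mul]
        rw [e, ez, ew, ← add_mul, hsum, one_mul]
    exact convexHull_min hgen hconv hx
  · -- majorization → hull
    intro h
    by_contra hx
    set S := {y : Fin n → ℝ | ∃ π : Equiv.Perm (Fin n), y = fun i => a (π i)} with hS
    have hSfin : S.Finite := by
      have : S = Set.range (fun π : Equiv.Perm (Fin n) => fun i => a (π i)) := by
        ext y
        simp only [hS, Set.mem_setOf_eq, Set.mem_range]
        exact ⟨fun ⟨π, hy⟩ => ⟨π, hy.symm⟩, fun ⟨π, hy⟩ => ⟨π, hy.symm⟩⟩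
      rw [this]
      exact Set.finite_range _
    have hclosed : IsClosed (convexHull ℝ S) := (hSfin.isCompact_convexHull ℝ).isClosed
    obtain ⟨f, u, hfu, hux⟩ :=
      geometric_hahn_banach_closed_point (convex_convexHull ℝ S) hclosed hx
    set c : Fin n → ℝ := fun i => f (Pi.single i 1) with hc
    have hy : ∀ y : Fin n → ℝ, ∑ i, y i • (Pi.single i (1 : ℝ) : Fin n → ℝ) = y := by
      intro y
      have e : ∀ i, y i • (Pi.single i (1 : ℝ) : Fin n → ℝ) = Pi.single i (y i) := by
        intro i
        rw [← Pi.single_smul]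
        simp
      simp_rw [e]
      exact Finset.univ_sum_single y
    have hf : ∀ y : Fin n → ℝ, f y = ∑ i, c i * y i := by
      intro y
      conv_lhs => rw [← hy y]
      rw [map_sum]
      refine Finset.sum_congr rfl fun i _ => ?_
      rw [f.map_smul]
      simp [hc, smul_eq_mul, mul_comm]
    obtain ⟨π, hπ⟩ := RadoAux.key_ineq h c
    have h1 : f x ≤ f (fun i => a (π i)) := by
      rw [hf, hf]
      exact hπ
    have h2 : (fun i => a (π i)) ∈ convexHull ℝ S := subset_convexHull ℝ S ⟨π, rfl⟩
    linarith [hfu _ h2]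
end

section
/- Let a, b ∈ ℝⁿ and let V_a, V_b denote the convex hulls of the sets of all coordinate permutations of a and b respectively. Then V_a ∩ V_b = ∅ if and only if Σ_{k=1}^n a_k ≠ Σ_{k=1}^n b_k. -/
open Finset

/-- The permutahedron of `a`: the convex hull of all coordinate permutations of `a`. -/
def permutahedron {n : ℕ} (a : Fin n → ℝ) : Set (Fin n → ℝ) :=
  convexHull ℝ {y : Fin n → ℝ | ∃ π : Equiv.Perm (Fin n), y = fun i => a (π i)}

lemma sum_eq_of_mem_permutahedron {n : ℕ} (a : Fin n → ℝ) {x : Fin n → ℝ}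
    (hx : x ∈ permutahedron a) : ∑ i, x i = ∑ i, a i := by
  have hsub : permutahedron a ⊆ {x : Fin n → ℝ | ∑ i, x i = ∑ i, a i} := by
    apply convexHull_min
    · rintro y ⟨π, rfl⟩
      simpa using Equiv.sum_comp π a
    · intro x hx y hy α β hα hβ hαβ
      simp only [Set.mem_setOf_eq] at *
      have : ∑ i, (α • x + β • y) i = α * (∑ i, x i) + β * (∑ i, y i) := by
        simp [Finset.sum_add_distrib, Finset.mul_sum]
      rw [this, hx, hy, ← add_mul, hαβ, one_mul]
  exact hsub hx

lemma centroid_mem_permutahedron {n : ℕ} (hn : 0 < n) (a : Fin n → ℝ) :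
    (fun _ : Fin n => (∑ i, a i) / n) ∈ permutahedron a := by
  classical
  set N : ℝ := (Fintype.card (Equiv.Perm (Fin n)) : ℝ) with hNdef
  have hNpos : 0 < N := by
    rw [hNdef]
    exact_mod_cast Fintype.card_pos_iff.mpr (inferInstance : Nonempty (Equiv.Perm (Fin n)))
  -- all coordinate sums over permutations are equal
  have hconst : ∀ j j' : Fin n,
      (∑ π : Equiv.Perm (Fin n), a (π j)) = ∑ π : Equiv.Perm (Fin n), a (π j') := by
    intro j j'
    have := Equiv.sum_comp (Equiv.mulRight (Equiv.swap j j'))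
      (fun π : Equiv.Perm (Fin n) => a (π j))
    simpa [Equiv.Perm.mul_apply] using this.symm
  obtain ⟨j0⟩ : Nonempty (Fin n) := Fin.pos_iff_nonempty.mp hn
  have hkey : ∀ j : Fin n,
      (∑ π : Equiv.Perm (Fin n), a (π j)) = N * (∑ i, a i) / n := by
    intro j
    have hsumj : ∑ j' : Fin n, (∑ π : Equiv.Perm (Fin n), a (π j')) = N * (∑ i, a i) := by
      rw [Finset.sum_comm]
      have : ∀ π : Equiv.Perm (Fin n), (∑ j' : Fin n, a (π j')) = ∑ i, a i := fun π =>
        Equiv.sum_comp π a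
      simp [this, hNdef]
    have hall : ∑ j' : Fin n, (∑ π : Equiv.Perm (Fin n), a (π j'))
        = n * ∑ π : Equiv.Perm (Fin n), a (π j) := by
      rw [Finset.sum_congr rfl (fun j' _ => hconst j' j)]
      simp [Finset.sum_const, nsmul_eq_mul]
    have hn' : (n : ℝ) ≠ 0 := by exact_mod_cast hn.ne'
    field_simp
    rw [← hsumj, hall]
    ring
  have hc : Finset.univ.centerMass (fun _ : Equiv.Perm (Fin n) => (1 : ℝ))
      (fun π => fun i => a (π i)) = fun _ : Fin n => (∑ i, a i) / n := by
    funext j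
    simp only [Finset.centerMass, Finset.sum_const, Finset.card_univ, nsmul_eq_mul, mul_one,
      one_smul, smul_eq_mul]
    have : (∑ π : Equiv.Perm (Fin n), fun i => a (π i)) j
        = ∑ π : Equiv.Perm (Fin n), a (π j) := by
      simp [Finset.sum_apply]
    simp only [Pi.smul_apply, smul_eq_mul]
    rw [Finset.sum_apply, hkey j]
    have hn' : (n : ℝ) ≠ 0 := by exact_mod_cast hn.ne'
    field_simp [hNdef]
    rw [hNdef]
  rw [← hc]
  apply Finset.centerMass_mem_convexHull
  · intro i _; norm_num
  · rw [Finset.sum_const, Finset.card_univ, nsmul_eq_mul, mul_one]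
    rw [← hNdef]
    exact hNpos
  · intro π _
    exact ⟨π, rfl⟩

/-- The permutahedra of `a` and `b` are disjoint if and only if the coordinate sums
of `a` and `b` differ. -/
theorem permutahedron_disjoint_iff_sum_ne (n : ℕ) (a b : Fin n → ℝ) :
    permutahedron a ∩ permutahedron b = ∅ ↔ (∑ i, a i) ≠ ∑ i, b i := by
  constructor
  · intro h hsum
    rcases Nat.eq_zero_or_pos n with hn | hn
    · subst hn
      have hab : a = b := funext fun i => i.elim0
      have ha : a ∈ permutahedron a :=
        subset_convexHull ℝ _ ⟨1, by funext i; simp⟩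
      have hb : a ∈ permutahedron b := hab ▸ ha
      have : a ∈ permutahedron a ∩ permutahedron b := ⟨ha, hb⟩
      rw [h] at this
      exact this
    · have h1 := centroid_mem_permutahedron hn a
      have h2 := centroid_mem_permutahedron hn b
      rw [hsum] at h1
      have : (fun _ : Fin n => (∑ i, b i) / n) ∈ permutahedron a ∩ permutahedron b := ⟨h1, h2⟩
      rw [h] at this
      exact this
  · intro h
    rw [Set.eq_empty_iff_forall_notMem]
    rintro x ⟨hxa, hxb⟩
    exact h ((sum_eq_of_mem_permutahedron a hxa).symm.trans (sum_eq_of_mem_permutahedron b hxb))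
end

section
/- Let a, x ∈ ℝⁿ have all components nonnegative, and let V_{±π(a)} denote the convex hull of the set {(ε_1 a_{π(1)}, …, ε_n a_{π(n)}) : π ∈ S_n, ε ∈ {−1, +1}ⁿ} of all signed coordinate permutations of a. Then x ∈ V_{±π(a)} if and only if x is weakly majorized by a, i.e. for every l ∈ {1, …, n} the sum of the l largest components of x is at most the sum of the l largest components of a. -/
open Finset

/-- `x` is weakly majorized by `a`: for every `1 ≤ l ≤ n` the sum of the `l`
largest components of `x` is at most that of `a`. -/
def WeaklyMajorizes {n : ℕ} (x a : Fin n → ℝ) : Prop :=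
  ∀ l, 1 ≤ l → l ≤ n → sumLargest x l ≤ sumLargest a l

/-- The set of all signed coordinate permutations of `a`. -/
def signPermSet {n : ℕ} (a : Fin n → ℝ) : Set (Fin n → ℝ) :=
  {y | ∃ (π : Equiv.Perm (Fin n)) (ε : Fin n → ℝ),
    (∀ i, ε i = 1 ∨ ε i = -1) ∧ y = fun i => ε i * a (π i)}

/-! ### Auxiliary lemmas -/

/-- The initial segment of `Fin n` of size `l`. -/
def iniSeg {n : ℕ} (l : ℕ) (hl : l ≤ n) : Finset (Fin n) :=
  Finset.univ.image (Fin.castLE hl)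

lemma card_iniSeg {n l : ℕ} (hl : l ≤ n) : (iniSeg l hl).card = l := by
  rw [iniSeg, Finset.card_image_of_injective _ (Fin.castLE_injective hl), Finset.card_univ,
    Fintype.card_fin]

lemma sum_iniSeg {n l : ℕ} (hl : l ≤ n) (h : Fin n → ℝ) :
    ∑ i ∈ iniSeg l hl, h i = ∑ k : Fin l, h (Fin.castLE hl k) := by
  rw [iniSeg, Finset.sum_image (fun a _ b _ hab => Fin.castLE_injective hl hab)]

lemma strictMono_nat_le {l : ℕ} (f : Fin l → ℕ) (hf : StrictMono f) (k : Fin l) : (k : ℕ) ≤ f k := by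
  obtain ⟨m, hm⟩ := k
  induction m with
  | zero => exact Nat.zero_le _
  | succ m ih =>
    have h1 : m < l := Nat.lt_of_succ_lt hm
    have h2 : f ⟨m, h1⟩ < f ⟨m+1, hm⟩ := hf (by simp [Fin.lt_def])
    have h3 : m ≤ f ⟨m, h1⟩ := ih h1
    have h4 : ((⟨m+1, hm⟩ : Fin l) : ℕ) = m + 1 := rfl
    omega

/-- Sum over a finset of card `l` of an antitone function is at most the sum over the
initial segment of size `l`. -/
lemma sum_le_sum_iniSeg {n l : ℕ} (hl : l ≤ n) (g : Fin n → ℝ) (hg : Antitone g)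
    (B : Finset (Fin n)) (hB : B.card = l) :
    ∑ i ∈ B, g i ≤ ∑ k : Fin l, g (Fin.castLE hl k) := by
  have himg : Finset.univ.image (B.orderEmbOfFin hB) = B := by
    apply Finset.coe_injective
    rw [Finset.coe_image, Finset.coe_univ, Set.image_univ, Finset.range_orderEmbOfFin]
  have hsum : ∑ i ∈ B, g i = ∑ k : Fin l, g (B.orderEmbOfFin hB k) := by
    conv_lhs => rw [← himg]
    exact Finset.sum_image (fun a _ b _ hab => (B.orderEmbOfFin hB).injective hab)
  rw [hsum]
  apply Finset.sum_le_sum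
  intro k _
  apply hg
  rw [Fin.le_def]
  have : (k : ℕ) ≤ ((B.orderEmbOfFin hB k : Fin n) : ℕ) :=
    strictMono_nat_le (fun j => ((B.orderEmbOfFin hB j : Fin n) : ℕ))
      (fun i j hij => by exact_mod_cast Fin.lt_def.mp ((B.orderEmbOfFin hB).strictMono hij)) k
  simpa using this

lemma sumSet_finite {n : ℕ} (x : Fin n → ℝ) (l : ℕ) :
    (((fun A : Finset (Fin n) => ∑ i ∈ A, x i) '' {A | A.card = l})).Finite :=
  (Set.toFinite _).image _

lemma sumSet_nonempty {n l : ℕ} (x : Fin n → ℝ) (hl : l ≤ n) :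
    (((fun A : Finset (Fin n) => ∑ i ∈ A, x i) '' {A | A.card = l})).Nonempty :=
  ⟨_, ⟨iniSeg l hl, card_iniSeg hl, rfl⟩⟩

lemma le_sumLargest {n l : ℕ} (x : Fin n → ℝ) (A : Finset (Fin n)) (hA : A.card = l) :
    ∑ i ∈ A, x i ≤ sumLargest x l :=
  le_csSup (sumSet_finite x l).bddAbove ⟨A, hA, rfl⟩

lemma sumLargest_le {n l : ℕ} (x : Fin n → ℝ) (hl : l ≤ n) (C : ℝ)
    (h : ∀ A : Finset (Fin n), A.card = l → ∑ i ∈ A, x i ≤ C) :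
    sumLargest x l ≤ C := by
  apply csSup_le (sumSet_nonempty x hl)
  rintro r ⟨A, hA, rfl⟩
  exact h A hA

/-- Abel summation identity. -/
lemma abel_sum (B X : ℕ → ℝ) (m : ℕ) :
    ∑ k ∈ Finset.range m, B k * X k
      = (∑ k ∈ Finset.range m, (B k - B (k+1)) * ∑ j ∈ Finset.range (k+1), X j)
        + B m * ∑ j ∈ Finset.range m, X j := by
  induction m with
  | zero => simp
  | succ m ih =>
    rw [Finset.sum_range_succ (fun k => B k * X k), ih,
      Finset.sum_range_succ (fun k => (B k - B (k+1)) * ∑ j ∈ Finset.range (k+1), X j),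
      Finset.sum_range_succ X m]
    ring

lemma abel_le (B X A : ℕ → ℝ) (m : ℕ)
    (hBmono : ∀ k, k < m → B (k+1) ≤ B k) (hBm : 0 ≤ B m)
    (hS : ∀ k, k < m → ∑ j ∈ Finset.range (k+1), X j ≤ ∑ j ∈ Finset.range (k+1), A j) :
    ∑ k ∈ Finset.range m, B k * X k ≤ ∑ k ∈ Finset.range m, B k * A k := by
  rw [abel_sum B X m, abel_sum B A m]
  have hSm : ∑ j ∈ Finset.range m, X j ≤ ∑ j ∈ Finset.range m, A j := by
    rcases Nat.eq_zero_or_pos m with h | h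
    · simp [h]
    · have := hS (m - 1) (by omega)
      rwa [Nat.sub_add_cancel h] at this
  apply add_le_add
  · apply Finset.sum_le_sum
    intro k hk
    rw [Finset.mem_range] at hk
    exact mul_le_mul_of_nonneg_left (hS k hk) (sub_nonneg.mpr (hBmono k hk))
  · exact mul_le_mul_of_nonneg_left hSm hBm

/-- Existence of an antitone sorting permutation. -/
lemma exists_antitone_sort {n : ℕ} (b : Fin n → ℝ) :
    ∃ σ : Equiv.Perm (Fin n), Antitone (b ∘ σ) := by
  refine ⟨Tuple.sort (fun i => -b i), fun i j hij => ?_⟩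
  have := Tuple.monotone_sort (fun i => -b i) hij
  simpa using this

/-- The sorted formula for `sumLargest`. -/
lemma sumLargest_sorted {n l : ℕ} (hl : l ≤ n) (a : Fin n → ℝ) (τ : Equiv.Perm (Fin n))
    (hτ : Antitone (a ∘ τ)) :
    sumLargest a l = ∑ k : Fin l, a (τ (Fin.castLE hl k)) := by
  apply le_antisymm
  · apply sumLargest_le a hl
    intro A hA
    have hsum : ∑ i ∈ A, a i = ∑ j ∈ A.image τ.symm, (a ∘ τ) j := by
      rw [Finset.sum_image (fun u _ v _ huv => τ.symm.injective huv)]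
      simp
    rw [hsum]
    exact sum_le_sum_iniSeg hl (a ∘ τ) hτ _
      (by rw [Finset.card_image_of_injective _ τ.symm.injective, hA])
  · have hcard : ((iniSeg l hl).image τ).card = l := by
      rw [Finset.card_image_of_injective _ τ.injective, card_iniSeg hl]
    have := le_sumLargest a ((iniSeg l hl).image τ) hcard
    rwa [Finset.sum_image (fun u _ v _ huv => τ.injective huv), sum_iniSeg hl (fun i => a (τ i))]
      at this

/-- Key rearrangement/Abel lemma: a weighted sum of `x` with nonnegative weights is bounded
by the corresponding weighted sum of a suitable permutation of `a`. -/
lemma dot_le {n : ℕ} (b a x : Fin n → ℝ) (hb : ∀ i, 0 ≤ b i)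
    (hmaj : WeaklyMajorizes x a) :
    ∃ π : Equiv.Perm (Fin n), ∑ i, b i * x i ≤ ∑ i, b i * a (π i) := by
  obtain ⟨σ, hσ⟩ := exists_antitone_sort b
  obtain ⟨τ, hτ⟩ := exists_antitone_sort a
  refine ⟨τ * σ⁻¹, ?_⟩
  have h1 : ∑ i, b i * x i = ∑ k, b (σ k) * x (σ k) :=
    (Equiv.sum_comp σ (fun i => b i * x i)).symm
  have h2 : ∑ i, b i * a ((τ * σ⁻¹) i) = ∑ k, b (σ k) * a (τ k) := by
    rw [← Equiv.sum_comp σ (fun i => b i * a ((τ * σ⁻¹) i))]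
    simp [Equiv.Perm.mul_apply]
  rw [h1, h2]
  set B : ℕ → ℝ := fun k => if h : k < n then b (σ ⟨k, h⟩) else 0 with hBdef
  set X : ℕ → ℝ := fun k => if h : k < n then x (σ ⟨k, h⟩) else 0 with hXdef
  set A : ℕ → ℝ := fun k => if h : k < n then a (τ ⟨k, h⟩) else 0 with hAdef
  have hXsum : ∑ k, b (σ k) * x (σ k) = ∑ k ∈ Finset.range n, B k * X k := by
    rw [← Fin.sum_univ_eq_sum_range (fun k => B k * X k) n]
    apply Finset.sum_congr rfl
    intro i _
    simp [hBdef, hXdef, i.isLt]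
  have hAsum : ∑ k, b (σ k) * a (τ k) = ∑ k ∈ Finset.range n, B k * A k := by
    rw [← Fin.sum_univ_eq_sum_range (fun k => B k * A k) n]
    apply Finset.sum_congr rfl
    intro i _
    simp [hBdef, hAdef, i.isLt]
  rw [hXsum, hAsum]
  apply abel_le
  · intro k hk
    by_cases h2 : k + 1 < n
    · simp only [hBdef, dif_pos hk, dif_pos h2]
      exact hσ (by simp [Fin.le_def])
    · simp only [hBdef, dif_pos hk, dif_neg h2]
      exact hb _
  · simp [hBdef]
  · intro k hk
    have hk1 : k + 1 ≤ n := hk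
    have hXpart : ∑ j ∈ Finset.range (k+1), X j = ∑ i : Fin (k+1), x (σ (Fin.castLE hk1 i)) := by
      rw [← Fin.sum_univ_eq_sum_range X (k+1)]
      apply Finset.sum_congr rfl
      intro i _
      have hi : (i : ℕ) < n := lt_of_lt_of_le i.isLt hk1
      simp only [hXdef, dif_pos hi]
      rfl
    have hApart : ∑ j ∈ Finset.range (k+1), A j = ∑ i : Fin (k+1), a (τ (Fin.castLE hk1 i)) := by
      rw [← Fin.sum_univ_eq_sum_range A (k+1)]
      apply Finset.sum_congr rfl
      intro i _
      have hi : (i : ℕ) < n := lt_of_lt_of_le i.isLt hk1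
      simp only [hAdef, dif_pos hi]
      rfl
    rw [hXpart, hApart, ← sumLargest_sorted hk1 a τ hτ]
    have hcard : ((iniSeg (k+1) hk1).image σ).card = k + 1 := by
      rw [Finset.card_image_of_injective _ σ.injective, card_iniSeg hk1]
    have hle := le_sumLargest x ((iniSeg (k+1) hk1).image σ) hcard
    rw [Finset.sum_image (fun u _ v _ huv => σ.injective huv),
      sum_iniSeg hk1 (fun i => x (σ i))] at hle
    exact hle.trans (hmaj (k+1) (by omega) hk1)

lemma signPermSet_finite {n : ℕ} (a : Fin n → ℝ) : (signPermSet a).Finite := by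
  classical
  apply Set.Finite.subset (Set.finite_range
    (fun p : Equiv.Perm (Fin n) × (Fin n → Bool) =>
      fun i => (if p.2 i then (1:ℝ) else -1) * a (p.1 i)))
  rintro y ⟨π, ε, hε, rfl⟩
  refine ⟨⟨π, fun i => if ε i = 1 then true else false⟩, ?_⟩
  funext i
  rcases hε i with h | h <;> simp [h, show (-1:ℝ) ≠ 1 by norm_num]

lemma apply_eq_sum {n : ℕ} (f : (Fin n → ℝ) →L[ℝ] ℝ) (z : Fin n → ℝ) :
    f z = ∑ i, z i * f (Pi.single i 1) := by
  conv_lhs => rw [← Finset.univ_sum_single z]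
  rw [map_sum]
  apply Finset.sum_congr rfl
  intro i _
  have : Pi.single i (z i) = z i • (Pi.single i (1:ℝ) : Fin n → ℝ) := by
    rw [← Pi.single_smul, smul_eq_mul, mul_one]
  rw [this, map_smul, smul_eq_mul]

/-- For `a, x` with nonnegative components, `x` lies in the sign permutation polytope
of `a` if and only if `x` is weakly majorized by `a`. -/
theorem mem_signPermPolytope_iff_weaklyMajorizes (n : ℕ) (a x : Fin n → ℝ)
    (ha : ∀ i, 0 ≤ a i) (hx : ∀ i, 0 ≤ x i) :
    x ∈ convexHull ℝ (signPermSet a) ↔ WeaklyMajorizes x a := by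
  constructor
  · -- forward direction
    intro hmem l hl1 hln
    apply csSup_le (sumSet_nonempty x hln)
    rintro r ⟨A, hA, rfl⟩
    simp only [Set.mem_setOf_eq] at hA
    -- x lies in the halfspace {z | ∑ i ∈ A, z i ≤ sumLargest a l}
    have hconv : Convex ℝ {z : Fin n → ℝ | ∑ i ∈ A, z i ≤ sumLargest a l} := by
      apply convex_halfSpace_le
      exact ⟨fun u v => by simp [Finset.sum_add_distrib],
        fun c u => by simp [Finset.mul_sum]⟩
    have hsub : signPermSet a ⊆ {z : Fin n → ℝ | ∑ i ∈ A, z i ≤ sumLargest a l} := by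
      rintro y ⟨π, ε, hε, rfl⟩
      simp only [Set.mem_setOf_eq]
      have h1 : ∑ i ∈ A, ε i * a (π i) ≤ ∑ i ∈ A, a (π i) := by
        apply Finset.sum_le_sum
        intro i _
        rcases hε i with h | h <;> simp [h] <;> nlinarith [ha (π i)]
      have h2 : ∑ i ∈ A, a (π i) = ∑ j ∈ A.image π, a j := by
        rw [Finset.sum_image (fun u _ v _ huv => π.injective huv)]
      have h3 := le_sumLargest a (A.image π)
        (by rw [Finset.card_image_of_injective _ π.injective, hA])
      linarith
    exact convexHull_min hsub hconv hmem
  · -- reverse direction, via Hahn–Banach separation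
    intro hmaj
    by_contra hmem
    have hcl : IsClosed (convexHull ℝ (signPermSet a)) :=
      ((signPermSet_finite a).isCompact_convexHull ℝ).isClosed
    obtain ⟨f, u, hfu, hux⟩ :=
      geometric_hahn_banach_closed_point (convex_convexHull ℝ _) hcl hmem
    set c : Fin n → ℝ := fun i => f (Pi.single i 1) with hc
    have hc' : ∀ i, f (Pi.single i 1) = c i := fun i => rfl
    obtain ⟨π, hπ⟩ := dot_le (fun i => |c i|) a x (fun i => abs_nonneg _) hmaj
    set ε : Fin n → ℝ := fun i => if 0 ≤ c i then 1 else -1 with hε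
    set y : Fin n → ℝ := fun i => ε i * a (π i) with hy
    have hymem : y ∈ signPermSet a :=
      ⟨π, ε, fun i => by by_cases h : 0 ≤ c i <;> simp [hε, h], rfl⟩
    have hfy : f y = ∑ i, |c i| * a (π i) := by
      rw [apply_eq_sum]
      apply Finset.sum_congr rfl
      intro i _
      have hεc : ε i * c i = |c i| := by
        by_cases h : 0 ≤ c i
        · simp [hε, h, abs_of_nonneg h]
        · simp [hε, h, abs_of_neg (lt_of_not_ge h)]
      calc y i * f (Pi.single i 1) = (ε i * c i) * a (π i) := by
            simp only [hy, hc' i]; ring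
        _ = |c i| * a (π i) := by rw [hεc]
    have hfx : f x ≤ ∑ i, |c i| * x i := by
      rw [apply_eq_sum]
      simp only [hc']
      apply Finset.sum_le_sum
      intro i _
      calc x i * c i ≤ x i * |c i| := mul_le_mul_of_nonneg_left (le_abs_self _) (hx i)
        _ = |c i| * x i := mul_comm _ _
    have := hfu y (subset_convexHull ℝ _ hymem)
    rw [hfy] at this
    linarith
end
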